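/- Let s̃ be a tenable forest ECD with z̃ roots, m̃ vertices, and maximum children number Δ̃. Sample a uniform forest from F_{s̃}, and let X₁,…,X_r be the children-counts of the roots at r distinct positions, with r ≤ m̃/2. Then for any i₁,…,i_r, P(X₁ = i₁,…,X_r = i_r) ≤ r·2^r·(1 + Δ̃/z̃)·(s̃_{i₁}·…·s̃_{i_r})/m̃^r. -/

import Mathlib

open scoped BigOperators Classical
open Filter MeasureTheory

namespace Paper

inductive PlaneTree : Type
  | node : List PlaneTree → PlaneTree

namespace PlaneTree

def deg : PlaneTree → ℕ
  | node ts => ts.length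

mutual
  def pos : PlaneTree → List (List ℕ)
    | node ts => [] :: posF 0 ts
  def posF : ℕ → List PlaneTree → List (List ℕ)
    | _, [] => []
    | i, t :: ts => (pos t).map (fun q => i :: q) ++ posF (i + 1) ts
end

mutual
  def dfsDeg : PlaneTree → List ℕ
    | node ts => ts.length :: dfsDegF ts
  def dfsDegF : List PlaneTree → List ℕ
    | [] => []
    | t :: ts => dfsDeg t ++ dfsDegF ts
end

def subtreeAt : PlaneTree → List ℕ → Option PlaneTree
  | t, [] => some t
  | node ts, i :: p =>
    match ts[i]? with
    | some t' => subtreeAt t' p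
    | none => none

def numChild (t : PlaneTree) (p : List ℕ) : ℕ := ((subtreeAt t p).map deg).getD 0

def IsVertex (t : PlaneTree) (p : List ℕ) : Prop := (subtreeAt t p).isSome

def IsLeaf (t : PlaneTree) (p : List ℕ) : Prop := (subtreeAt t p).isSome ∧ numChild t p = 0

/-- number of vertices of `t` having exactly `i` children (empirical children distribution) -/
def ecd (t : PlaneTree) (i : ℕ) : ℕ :=
  ((pos t).filter fun p => decide (numChild t p = i)).length

/-- ECD of a plane forest with ranked roots -/
def ecdF (f : List PlaneTree) (i : ℕ) : ℕ := (f.map fun t => ecd t i).sum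

/-- number of children of the `j`-th root of a forest -/
def rootDeg (f : List PlaneTree) (j : ℕ) : ℕ := deg (f.getD j (node []))

/-- the set of plane forests with ranked roots with ECD `s` -/
def forestSet (s : ℕ → ℕ) : Set (List PlaneTree) := {f | ∀ i, ecdF f i = s i}

/-- the set of plane trees with ECD `s` -/
def treeSet (s : ℕ → ℕ) : Set PlaneTree := {t | ∀ i, ecd t i = s i}

/-- strict depth-first (preorder) order on positions -/
def dfLT (p q : List ℕ) : Prop := List.Lex (· < ·) p q

def parent (p : List ℕ) : List ℕ := p.dropLast

/-- `q` is a strict ancestor of `p`, i.e. `q ∈ [ρ, p)` -/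
def StrictAnc (q p : List ℕ) : Prop := q <+: p ∧ q ≠ p

/-- admissible (ordered) pair of leaves -/
def Admissible (t : PlaneTree) (u v : List ℕ) : Prop :=
  IsLeaf t u ∧ IsLeaf t v ∧ 2 ≤ v.length ∧
    StrictAnc (parent (parent v)) (parent u) ∧ dfLT (parent u) (parent v)

def ASet (t : PlaneTree) : Set (List ℕ × List ℕ) := {uv | Admissible t uv.1 uv.2}

def fA (t : PlaneTree) (u : List ℕ) : Set (List ℕ) := {v | Admissible t u v}

def B2 (t : PlaneTree) (u : List ℕ) : Set (List ℕ) :=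
  {v | IsVertex t v ∧ 2 ≤ v.length ∧ StrictAnc (parent (parent v)) u}

noncomputable def leafFinset (t : PlaneTree) : Finset (List ℕ) :=
  ((pos t).toFinset).filter fun p => IsLeaf t p

def leafOf {k : ℕ} (w : Fin k → List ℕ × List ℕ) (y : Fin k × Bool) : List ℕ :=
  if y.2 then (w y.1).1 else (w y.1).2

/-- ordered `k`-tuples of admissible pairs using `2k` distinct leaves -/
def AkOrd (t : PlaneTree) (k : ℕ) : Set (Fin k → List ℕ × List ℕ) :=
  {w | (∀ a, Admissible t (w a).1 (w a).2) ∧ Function.Injective (leafOf w)}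

/-- unordered collections of `k` admissible pairs using `2k` distinct leaves -/
def Ak (t : PlaneTree) (k : ℕ) : Set (Finset (List ℕ × List ℕ)) :=
  {x | x.card = k ∧ (∀ uv ∈ x, Admissible t uv.1 uv.2) ∧
    Set.InjOn (fun y : (List ℕ × List ℕ) × Bool => if y.2 then y.1.1 else y.1.2)
      {y | y.1 ∈ x}}

/-- the set `T_s^(k)` of pairs of a plane tree with ECD `s` and a set of `k` admissible pairs -/
def Tsk (s : ℕ → ℕ) (k : ℕ) : Set (PlaneTree × Finset (List ℕ × List ℕ)) :=
  {tx | (∀ i, ecd tx.1 i = s i) ∧ tx.2 ∈ Ak tx.1 k}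

end PlaneTree

/-- labeled plane trees -/
inductive LTree : Type
  | node : ℕ → List LTree → LTree

namespace LTree

mutual
  def shape : LTree → PlaneTree
    | node _ ts => .node (shapeF ts)
  def shapeF : List LTree → List PlaneTree
    | [] => []
    | t :: ts => shape t :: shapeF ts
end

mutual
  def dfsLab : LTree → List ℕ
    | node a ts => a :: dfsLabF ts
  def dfsLabF : List LTree → List ℕ
    | [] => []
    | t :: ts => dfsLab t ++ dfsLabF ts
end

mutual
  def dfsDeg : LTree → List ℕ
    | node _ ts => ts.length :: dfsDegF ts
  def dfsDegF : List LTree → List ℕ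
    | [] => []
    | t :: ts => dfsDeg t ++ dfsDegF ts
end

def subtreeAt : LTree → List ℕ → Option LTree
  | t, [] => some t
  | node _ ts, i :: p =>
    match ts[i]? with
    | some t' => subtreeAt t' p
    | none => none

def labelAt (t : LTree) (p : List ℕ) : ℕ :=
  ((subtreeAt t p).map fun u => match u with | node a _ => a).getD 0

end LTree

/-- partial-sum steps of the permuted walk -/
def steps {m : ℕ} (c : Fin m → ℕ) (π : Equiv.Perm (Fin m)) : List ℤ :=
  List.ofFn fun i => (c (π i) : ℤ) - 1

/-- first index `j ∈ [1, length]` at which the partial sums attain their minimum -/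
noncomputable def firstMinIdx (l : List ℤ) : ℕ :=
  WithTop.untopD 0 ((Finset.Icc 1 l.length).filter fun j =>
      ∀ j' ∈ Finset.Icc 1 l.length, (l.take j).sum ≤ (l.take j').sum).min

/-- the DFS vertex sequence obtained by rotating the uniformly permuted vertex
sequence at the first minimum of its Łukasiewicz-type walk (Vervaat transform) -/
noncomputable def rotSeq {m : ℕ} (c : Fin m → ℕ) (π : Equiv.Perm (Fin m)) : List (Fin m) :=
  (List.ofFn fun i => π i).rotate (firstMinIdx (steps c π))

/-- the degree of a vertex in a (simple) edge set -/
def degIn (E : Finset (Sym2 ℕ)) (v : ℕ) : ℕ := (E.filter fun e => v ∈ e).card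

/-- degree of a vertex in a multigraph given by an edge multiset (loops count twice) -/
def mdeg (E : Multiset (Sym2 ℕ)) (v : ℕ) : ℕ :=
  (E.map fun e => (if v ∈ e then 1 else 0) + (if e = s(v, v) then 1 else 0)).sum

/-- connectivity of a (multi)graph on vertex set `V` with edges `E` -/
def ConnOn (V : Finset ℕ) (E : Set (Sym2 ℕ)) : Prop :=
  ∀ a ∈ V, ∀ b ∈ V, Relation.ReflTransGen (fun a b => s(a, b) ∈ E) a b

/-- the set of simple connected labeled graphs on `{1, …, m}` with degree sequence `d` -/
def GconSet (m : ℕ) (d : ℕ → ℕ) : Set (Finset (Sym2 ℕ)) :=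
  {E | (∀ e ∈ E, ¬ e.IsDiag) ∧ (∀ e ∈ E, ∀ v ∈ e, v ∈ Finset.Icc 1 m) ∧
       (∀ v ∈ Finset.Icc 1 m, degIn E v = d v) ∧ ConnOn (Finset.Icc 1 m) (E : Set (Sym2 ℕ))}

/-- ECD of the children sequence `(d̃₂ − 1, …, d̃_{m̃} − 1, 0, …, 0)` (with `2k` zeros) -/
def ecdFromDeg (m k : ℕ) (d : ℕ → ℕ) (i : ℕ) : ℕ :=
  ((Finset.Icc 2 m).filter fun j => d j = i + 1).card + if i = 0 then 2 * k else 0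

/-- `≪` order on admissible pairs -/
def pairLT (a b : List ℕ × List ℕ) : Prop :=
  PlaneTree.dfLT (PlaneTree.parent a.1) (PlaneTree.parent b.1) ∨
    (PlaneTree.parent a.1 = PlaneTree.parent b.1 ∧
      PlaneTree.dfLT (PlaneTree.parent a.2) (PlaneTree.parent b.2))

/-- labeled elements of `T_s^(k)` as in the sampling algorithm: a labeled plane tree whose
labels are `{2, …, m̃ + 2k}`, in which the vertex labeled `j ≤ m̃` has `d̃_j − 1` children and
the vertices labeled `> m̃` are leaves, together with a `≪`-increasing tuple of `k` admissible
pairs of leaves with distinct leaves, the `j`-th pair carrying labels `(m̃+2j−1, m̃+2j)`. -/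
def IsLabeledElement (m k : ℕ) (d : ℕ → ℕ) (t : LTree)
    (x : Fin k → List ℕ × List ℕ) : Prop :=
  (LTree.dfsLab t).Perm (List.range' 2 (m - 1 + 2 * k)) ∧
  (∀ p ∈ PlaneTree.pos (LTree.shape t),
    PlaneTree.numChild (LTree.shape t) p =
      (if 2 ≤ LTree.labelAt t p ∧ LTree.labelAt t p ≤ m then d (LTree.labelAt t p) - 1 else 0)) ∧
  (∀ j, PlaneTree.Admissible (LTree.shape t) (x j).1 (x j).2) ∧
  Function.Injective (PlaneTree.leafOf x) ∧
  (∀ j j' : Fin k, j < j' → pairLT (x j) (x j')) ∧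
  (∀ j : Fin k, LTree.labelAt t (x j).1 = m + 2 * (j : ℕ) + 1 ∧
      LTree.labelAt t (x j).2 = m + 2 * (j : ℕ) + 2)

/-- the edge multiset of the graph `I(t, x)`: tree edges, with the leaves of the admissible
pairs deleted and an edge joining the two parents of each admissible pair added -/
noncomputable def Iedges (t : LTree) {k : ℕ} (x : Fin k → List ℕ × List ℕ) :
    Multiset (Sym2 ℕ) :=
  (↑(((PlaneTree.pos (LTree.shape t)).filter fun p =>
        decide (p ≠ ([] : List ℕ) ∧ ∀ j, p ≠ (x j).1 ∧ p ≠ (x j).2)).map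
      fun p => s(LTree.labelAt t (PlaneTree.parent p), LTree.labelAt t p)) : Multiset (Sym2 ℕ))
  + ↑(List.ofFn fun j =>
      s(LTree.labelAt t (PlaneTree.parent (x j).1), LTree.labelAt t (PlaneTree.parent (x j).2)))

/- Brownian excursion: Gaussian/Bessel kernels and finite-dimensional densities -/
noncomputable def gaussD (s x : ℝ) : ℝ := Real.exp (-(x ^ 2) / (2 * s)) / Real.sqrt (2 * Real.pi * s)

noncomputable def killedK (s x y : ℝ) : ℝ := gaussD s (y - x) - gaussD s (y + x)

noncomputable def bes3K (s x y : ℝ) : ℝ := (y / x) * killedK s x y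

noncomputable def exStart (t x : ℝ) : ℝ :=
  Real.sqrt (2 / Real.pi) * x ^ 2 * t ^ (-(3 : ℝ) / 2) * Real.exp (-(x ^ 2) / (2 * t))

noncomputable def exEnd (s x : ℝ) : ℝ := (2 / s) * gaussD s x

/-- finite-dimensional density of the standard Brownian excursion at times `t 0 < … < t n` -/
noncomputable def exFdd {n : ℕ} (t : Fin (n + 1) → ℝ) (x : Fin (n + 1) → ℝ) : ℝ :=
  if ∀ i, 0 < x i then
    Real.sqrt (Real.pi / 2) * exStart (t 0) (x 0) *
      (∏ i : Fin n, bes3K (t i.succ - t i.castSucc) (x i.castSucc) (x i.succ)) *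
      exEnd (1 - t (Fin.last n)) (x (Fin.last n))
  else 0

/-- `e` is a standard Brownian excursion on `[0,1]`: continuous nonnegative paths vanishing at
the endpoints, positive inside, with the excursion finite-dimensional densities. -/
def IsStdBrownianExcursion {Ω : Type*} [MeasureSpace Ω] (e : Ω → ℝ → ℝ) : Prop :=
  (∀ ω, Continuous (e ω)) ∧ (∀ ω, e ω 0 = 0) ∧ (∀ ω, e ω 1 = 0) ∧
  (∀ ω, ∀ x ∈ Set.Ioo (0 : ℝ) 1, 0 < e ω x) ∧
  (∀ t : ℝ, Measurable fun ω => e ω t) ∧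
  ∀ (n : ℕ) (t : Fin (n + 1) → ℝ), StrictMono t → 0 < t 0 → t (Fin.last n) < 1 →
    Measure.map (fun ω i => e ω (t i)) (volume : Measure Ω)
      = volume.withDensity fun x => ENNReal.ofReal (exFdd t x)

/-- `j`-th smallest value (0-based) among `ω 0, …, ω (m−1)` -/
noncomputable def orderStat {m : ℕ} (ω : Fin m → ℝ) (j : ℕ) : ℝ :=
  ((Multiset.map ω Finset.univ.val).sort (· ≤ ·)).getD j 0

end Paper
section Aux
namespace Paper
namespace PlaneTree

/-- list of children-numbers over all positions -/
def DL (t : PlaneTree) : List ℕ := (pos t).map (numChild t)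

lemma ecd_eq_count (t : PlaneTree) (b : ℕ) : ecd t b = (DL t).count b := by
  rw [ecd, DL, ← List.countP_eq_length_filter, List.count, List.countP_map]
  congr 1

lemma numChild_cons (us : List PlaneTree) (k : ℕ) (t : PlaneTree)
    (h : us[k]? = some t) (q : List ℕ) :
    numChild (node us) (k :: q) = numChild t q := by
  simp [numChild, subtreeAt, h]

lemma map_numChild_posF : ∀ (ts us : List PlaneTree) (k : ℕ), us.drop k = ts →
    (posF k ts).map (numChild (node us)) = (ts.map DL).flatten := by
  intro ts
  induction ts with
  | nil => intro us k h; simp [posF]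
  | cons t ts ih =>
    intro us k h
    have h1 : us[k]? = some t := by
      have := List.getElem?_drop (xs := us) (i := k) (j := 0)
      rw [h] at this
      simpa using this.symm
    have h2 : us.drop (k+1) = ts := by
      have : (us.drop k).drop 1 = ts := by rw [h]; simp
      rwa [List.drop_drop] at this
    rw [posF, List.map_append, List.map_cons, List.flatten_cons, ih us (k+1) h2,
      List.map_map]
    congr 1
    exact List.map_congr_left fun q hq => numChild_cons us k t h1 q

lemma DL_node (ts : List PlaneTree) :
    DL (node ts) = ts.length :: (ts.map DL).flatten := by
  rw [DL, pos, List.map_cons, map_numChild_posF ts ts 0 (by simp)]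
  rfl

lemma DL_ne_nil (t : PlaneTree) : DL t ≠ [] := by
  cases t with | node ts => simp [DL_node]

lemma DL_length_pos (t : PlaneTree) : 1 ≤ (DL t).length :=
  List.length_pos_iff.mpr (DL_ne_nil t)

lemma sum_sum_eq (L : List (List ℕ)) (h : ∀ l ∈ L, l.sum + 1 = l.length) :
    (L.map List.sum).sum + L.length = (L.map List.length).sum := by
  induction L with
  | nil => simp
  | cons a L ih =>
    simp only [List.map_cons, List.sum_cons, List.length_cons]
    have ha := h a (List.mem_cons_self)
    have := ih (fun l hl => h l (List.mem_cons_of_mem a hl))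
    omega

lemma DL_sum_aux : ∀ n (t : PlaneTree), (DL t).length ≤ n →
    (DL t).sum + 1 = (DL t).length := by
  intro n
  induction n with
  | zero => intro t h; have := DL_length_pos t; omega
  | succ n ih =>
    intro t h
    cases t with | node ts =>
    rw [DL_node] at h ⊢
    simp only [List.sum_cons, List.length_cons, List.sum_flatten, List.length_flatten] at h ⊢
    have key : ∀ l ∈ ts.map DL, l.sum + 1 = l.length := by
      intro l hl
      obtain ⟨t', ht', rfl⟩ := List.mem_map.mp hl
      refine ih t' ?_
      have h1 : (DL t').length ≤ ((ts.map DL).map List.length).sum :=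
        List.single_le_sum (by intro x hx; omega) _
          (List.mem_map.mpr ⟨DL t', hl, rfl⟩)
      omega
    have h2 := sum_sum_eq (ts.map DL) key
    have h3 : (ts.map DL).length = ts.length := List.length_map DL
    omega

lemma DL_sum (t : PlaneTree) : (DL t).sum + 1 = (DL t).length :=
  DL_sum_aux _ t le_rfl

lemma sum_count_of_lt (l : List ℕ) (B : ℕ) (h : ∀ x ∈ l, x < B) :
    ∑ b ∈ Finset.range B, l.count b = l.length := by
  induction l with
  | nil => simp
  | cons a l ih =>
    have ha : a ∈ Finset.range B := Finset.mem_range.mpr (h a (List.mem_cons_self))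
    simp only [List.count_cons, beq_iff_eq, List.length_cons]
    rw [Finset.sum_add_distrib, ih (fun x hx => h x (List.mem_cons_of_mem a hx)),
      Finset.sum_ite_eq (Finset.range B) a (fun _ => 1), if_pos ha]

lemma sum_mul_count_of_lt (l : List ℕ) (B : ℕ) (h : ∀ x ∈ l, x < B) :
    ∑ b ∈ Finset.range B, b * l.count b = l.sum := by
  induction l with
  | nil => simp
  | cons a l ih =>
    have ha : a ∈ Finset.range B := Finset.mem_range.mpr (h a (List.mem_cons_self))
    simp only [List.count_cons, beq_iff_eq, List.sum_cons, Nat.mul_add, mul_ite,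
      Nat.mul_one, Nat.mul_zero]
    rw [Finset.sum_add_distrib, ih (fun x hx => h x (List.mem_cons_of_mem a hx)),
      Finset.sum_ite_eq (Finset.range B) a (fun b => b), if_pos ha]
    omega

end PlaneTree
end Paper
end Aux
namespace Paper
namespace PlaneTree

lemma ecdF_nil (b : ℕ) : ecdF [] b = 0 := rfl

lemma ecdF_cons (t : PlaneTree) (f : List PlaneTree) (b : ℕ) :
    ecdF (t :: f) b = ecd t b + ecdF f b := by simp [ecdF]

lemma ecdF_append (f g : List PlaneTree) (b : ℕ) :
    ecdF (f ++ g) b = ecdF f b + ecdF g b := by simp [ecdF]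

lemma ecd_node (ts : List PlaneTree) (b : ℕ) :
    ecd (node ts) b = (if ts.length = b then 1 else 0) + ecdF ts b := by
  rw [ecd_eq_count, DL_node, List.count_cons, List.count_flatten, List.map_map]
  have : ecdF ts b = (ts.map (List.count b ∘ DL)).sum := by
    simp only [ecdF, ecd_eq_count]
    rfl
  rw [← this]
  rcases eq_or_ne ts.length b with h | h <;> simp [h] <;> omega

lemma ecd_ge_one_of_deg (t : PlaneTree) : 1 ≤ ecd t (deg t) := by
  cases t with | node ts =>
  rw [ecd_node]
  simp [deg]

lemma ecd_le_ecdF (t : PlaneTree) (f : List PlaneTree) (ht : t ∈ f) (b : ℕ) :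
    ecd t b ≤ ecdF f b := by
  unfold ecdF
  exact List.single_le_sum (fun x _ => Nat.zero_le x) _ (List.mem_map.mpr ⟨t, ht, rfl⟩)

/-- every children-number appearing in a member of `forestSet s` has `s`-value ≥ 1 -/
lemma mem_DL_lt {s : ℕ → ℕ} {M : ℕ} (hsupp : ∀ i, M ≤ i → s i = 0)
    {f : List PlaneTree} (hf : f ∈ forestSet s) {t : PlaneTree} (ht : t ∈ f)
    {x : ℕ} (hx : x ∈ DL t) : x < M := by
  by_contra hlt
  push_neg at hlt
  have h1 : 1 ≤ (DL t).count x := List.count_pos_iff.mpr hx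
  have h2 : 1 ≤ ecd t x := by rw [ecd_eq_count]; exact h1
  have h3 : 1 ≤ ecdF f x := le_trans h2 (ecd_le_ecdF t f ht x)
  rw [hf x, hsupp x hlt] at h3
  omega

lemma sum_ecdF (f : List PlaneTree) (M : ℕ)
    (hb : ∀ t ∈ f, ∀ x ∈ DL t, x < M) :
    ∑ b ∈ Finset.range M, ecdF f b = ((f.map DL).map List.length).sum := by
  induction f with
  | nil => simp [ecdF]
  | cons t f ih =>
    simp only [ecdF_cons, List.map_cons, List.sum_cons, Finset.sum_add_distrib]
    rw [ih (fun t' ht' => hb t' (List.mem_cons_of_mem t ht'))]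
    congr 1
    have : ∀ b, ecd t b = (DL t).count b := fun b => ecd_eq_count t b
    simp only [this]
    exact sum_count_of_lt _ M (hb t (List.mem_cons_self))

lemma sum_mul_ecdF (f : List PlaneTree) (M : ℕ)
    (hb : ∀ t ∈ f, ∀ x ∈ DL t, x < M) :
    ∑ b ∈ Finset.range M, b * ecdF f b = ((f.map DL).map List.sum).sum := by
  induction f with
  | nil => simp [ecdF]
  | cons t f ih =>
    simp only [ecdF_cons, List.map_cons, List.sum_cons, Nat.mul_add, Finset.sum_add_distrib]
    rw [ih (fun t' ht' => hb t' (List.mem_cons_of_mem t ht'))]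
    congr 1
    have : ∀ b, ecd t b = (DL t).count b := fun b => ecd_eq_count t b
    simp only [this]
    exact sum_mul_count_of_lt _ M (hb t (List.mem_cons_self))

/-- vertex/edge count: length of a forest with given ECD -/
lemma length_forest {s : ℕ → ℕ} {M : ℕ} (hsupp : ∀ i, M ≤ i → s i = 0)
    {f : List PlaneTree} (hf : f ∈ forestSet s) :
    ∑ b ∈ Finset.range M, s b = (∑ b ∈ Finset.range M, b * s b) + f.length := by
  have hb : ∀ t ∈ f, ∀ x ∈ DL t, x < M := fun t ht x hx => mem_DL_lt hsupp hf ht hx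
  have h1 : ∑ b ∈ Finset.range M, s b = ((f.map DL).map List.length).sum := by
    rw [← sum_ecdF f M hb]
    exact Finset.sum_congr rfl fun b _ => (hf b).symm
  have h2 : ∑ b ∈ Finset.range M, b * s b = ((f.map DL).map List.sum).sum := by
    rw [← sum_mul_ecdF f M hb]
    exact Finset.sum_congr rfl fun b _ => by rw [hf b]
  have h3 := sum_sum_eq (f.map DL) (fun l hl => by
    obtain ⟨t, _, rfl⟩ := List.mem_map.mp hl; exact DL_sum t)
  rw [h1, h2]
  rw [List.length_map] at h3
  omega

lemma forestSet_eq_empty {s : ℕ → ℕ} {M : ℕ} (hsupp : ∀ i, M ≤ i → s i = 0)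
    (h : ∑ b ∈ Finset.range M, s b ≤ ∑ b ∈ Finset.range M, b * s b)
    (h1 : 1 ≤ ∑ b ∈ Finset.range M, s b) : forestSet s = ∅ := by
  ext f
  simp only [Set.mem_empty_iff_false, iff_false]
  intro hf
  have := length_forest hsupp hf
  have hlen : f.length = 0 := by omega
  rw [List.length_eq_zero_iff] at hlen
  subst hlen
  have : ∀ b, s b = 0 := fun b => (hf b).symm
  have : ∑ b ∈ Finset.range M, s b = 0 := Finset.sum_eq_zero fun b _ => this b
  omega

lemma ncard_biUnion {α : Type*} (n : ℕ) (F : ℕ → Set α) (hfin : ∀ c, c < n → (F c).Finite)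
    (hdisj : ∀ c, c < n → ∀ c', c' < n → c ≠ c' → ∀ x, x ∈ F c → x ∉ F c') :
    (⋃ c ∈ Finset.range n, F c).ncard = ∑ c ∈ Finset.range n, (F c).ncard := by
  induction n with
  | zero => simp
  | succ n ih =>
    have hU : (⋃ c ∈ Finset.range (n+1), F c) = (⋃ c ∈ Finset.range n, F c) ∪ F n := by
      rw [Finset.range_add_one]
      simp [Set.biUnion_insert, Set.union_comm]
    have hf1 : (⋃ c ∈ Finset.range n, F c).Finite :=
      Set.Finite.biUnion (Finset.range n).finite_toSet
        (fun c hc => hfin c (by simp at hc; omega))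
    have hf2 : (F n).Finite := hfin n (by omega)
    have hd : Disjoint (⋃ c ∈ Finset.range n, F c) (F n) := by
      rw [Set.disjoint_left]
      intro x hx hxn
      simp only [Set.mem_iUnion, Finset.mem_range] at hx
      obtain ⟨c, hc, hxc⟩ := hx
      exact hdisj c (by omega) n (by omega) (by omega) x hxc hxn
    rw [hU, Set.ncard_union_eq hd hf1 hf2, ih (fun c hc => hfin c (by omega))
        (fun c hc c' hc' hne => hdisj c (by omega) c' (by omega) hne),
      Finset.sum_range_succ]

end PlaneTree
end Paper
namespace Paper
namespace PlaneTree

/-- delete one occurrence of value `c` -/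
def sdel (s : ℕ → ℕ) (c : ℕ) : ℕ → ℕ := fun b => s b - (if b = c then 1 else 0)

lemma sdel_supp {s : ℕ → ℕ} {M : ℕ} (hsupp : ∀ i, M ≤ i → s i = 0) (c : ℕ) :
    ∀ i, M ≤ i → sdel s c i = 0 := by
  intro i hi; unfold sdel; rw [hsupp i hi]; simp

lemma sum_sdel {s : ℕ → ℕ} {M c : ℕ} (hc : c < M) (hsc : 1 ≤ s c) :
    ∑ b ∈ Finset.range M, sdel s c b = (∑ b ∈ Finset.range M, s b) - 1 := by
  unfold sdel
  rw [Finset.sum_tsub_distrib (Finset.range M)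
    (fun b _ => by
      rcases eq_or_ne b c with rfl | h
      · simpa using hsc
      · simp [h])]
  congr 1
  rw [Finset.sum_ite_eq' (Finset.range M) c (fun _ => 1)]
  simp [hc]

lemma sum_mul_sdel {s : ℕ → ℕ} {M c : ℕ} (hc : c < M) (hsc : 1 ≤ s c) :
    ∑ b ∈ Finset.range M, b * sdel s c b = (∑ b ∈ Finset.range M, b * s b) - c := by
  unfold sdel
  have : ∀ b, b * (s b - if b = c then 1 else 0)
      = b * s b - b * (if b = c then 1 else 0) := fun b => Nat.mul_sub b _ _
  simp only [this]
  rw [Finset.sum_tsub_distrib (Finset.range M)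
    (fun b _ => by
      rcases eq_or_ne b c with rfl | h
      · simpa using Nat.le_mul_of_pos_right _ hsc
      · simp [h])]
  congr 1
  simp only [mul_ite, mul_one, mul_zero]
  rw [Finset.sum_ite_eq' (Finset.range M) c (fun b => b)]
  simp [hc]

lemma prod_factorial_sdel {s : ℕ → ℕ} {M c : ℕ} (hc : c < M) (hsc : 1 ≤ s c) :
    ∏ b ∈ Finset.range M, (s b).factorial
      = s c * ∏ b ∈ Finset.range M, (sdel s c b).factorial := by
  have key : ∀ b ∈ Finset.range M,
      (s b).factorial = (sdel s c b).factorial * (if b = c then s c else 1) := by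
    intro b _
    rcases eq_or_ne b c with rfl | h
    · simp only [sdel, if_pos rfl]
      rw [mul_comm]
      exact (Nat.mul_factorial_pred (Nat.one_le_iff_ne_zero.mp hsc)).symm
    · simp [sdel, h]
  rw [Finset.prod_congr rfl key, Finset.prod_mul_distrib,
    Finset.prod_ite_eq' (Finset.range M) c (fun _ => s c), if_pos (Finset.mem_range.mpr hc),
    mul_comm]

/-- insertion of a new first root with `c` children -/
def ins (c : ℕ) (g : List PlaneTree) : List PlaneTree := node (g.take c) :: g.drop c

lemma ins_injective (c : ℕ) : Function.Injective (ins c) := by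
  intro g g' h
  simp only [ins, List.cons.injEq, node.injEq] at h
  rw [← List.take_append_drop c g, ← List.take_append_drop c g', h.1, h.2]

lemma ecdF_ins (c : ℕ) (g : List PlaneTree) (hcg : c ≤ g.length) (b : ℕ) :
    ecdF (ins c g) b = (if c = b then 1 else 0) + ecdF g b := by
  have hlen : (g.take c).length = c := by simp [hcg]
  rw [ins, ecdF_cons, ecd_node, hlen]
  have : ecdF g b = ecdF (g.take c) b + ecdF (g.drop c) b := by
    rw [← ecdF_append, List.take_append_drop]
  omega

lemma rootDeg_ins (c : ℕ) (g : List PlaneTree) (hcg : c ≤ g.length) :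
    rootDeg (ins c g) 0 = c := by
  simp [ins, rootDeg, deg, hcg]

/-- Lemma: the number of forests with a given ECD. -/
theorem forest_count : ∀ (m : ℕ) (s : ℕ → ℕ) (M : ℕ), (∀ i, M ≤ i → s i = 0) →
    (∑ b ∈ Finset.range M, s b = m) → 1 ≤ m →
    (forestSet s).Finite ∧
    (forestSet s).ncard * ∏ b ∈ Finset.range M, (s b).factorial
      = (m - ∑ b ∈ Finset.range M, b * s b) * (m - 1).factorial := by
  intro m
  induction m using Nat.strong_induction_on with
  | _ m IH =>
  intro s M hsupp hm hm1
  by_cases hze : m ≤ ∑ b ∈ Finset.range M, b * s b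
  · have hemp := forestSet_eq_empty hsupp (by omega) (by omega)
    rw [hemp]
    refine ⟨Set.finite_empty, ?_⟩
    rw [Set.ncard_empty]
    have : m - ∑ b ∈ Finset.range M, b * s b = 0 := by omega
    rw [this]; ring
  · push_neg at hze
    set e := ∑ b ∈ Finset.range M, b * s b with he
    set z := m - e with hzdef
    have hz1 : 1 ≤ z := by omega
    -- length of members
    have hlen : ∀ f ∈ forestSet s, f.length = z := by
      intro f hf
      have := length_forest hsupp hf
      omega
    -- root degree of members is < M and has s-value ≥ 1
    have hroot : ∀ f ∈ forestSet s, ∀ t ∈ f, 1 ≤ s (deg t) ∧ deg t < M := by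
      intro f hf t ht
      have h1 : 1 ≤ ecd t (deg t) := ecd_ge_one_of_deg t
      have h2 : 1 ≤ ecdF f (deg t) := le_trans h1 (ecd_le_ecdF t f ht _)
      rw [hf (deg t)] at h2
      refine ⟨h2, ?_⟩
      by_contra hM
      push_neg at hM
      rw [hsupp _ hM] at h2
      omega
    rcases Nat.lt_or_ge m 2 with hm2 | hm2
    · -- base case m = 1
      have hme : m = 1 := by omega
      subst hme
      have he0 : e = 0 := by omega
      have hM1 : 1 ≤ M := by
        by_contra hM
        push_neg at hM
        interval_cases M <;> simp_all
      have hsb : ∀ b, b ≠ 0 → s b = 0 := by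
        intro b hb
        rcases Nat.lt_or_ge b M with h | h
        · have : b * s b ≤ e := he ▸ Finset.single_le_sum
            (f := fun b => b * s b) (fun i _ => Nat.zero_le _) (Finset.mem_range.mpr h)
          have hb1 : 1 ≤ b := Nat.one_le_iff_ne_zero.mpr hb
          nlinarith [Nat.le_of_eq he0]
        · exact hsupp b h
      have hs0 : s 0 = 1 := by
        have h0 : ∑ b ∈ Finset.range M, s b = s 0 :=
          Finset.sum_eq_single (s := Finset.range M) (f := fun b => s b) 0
            (fun b _ hb => hsb b hb) (fun h => absurd (Finset.mem_range.mpr hM1) h)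
        omega
      have hset : forestSet s = {[node []]} := by
        ext f
        constructor
        · intro hf
          have h1 : f.length = 1 := by have := hlen f hf; omega
          obtain ⟨t, rfl⟩ := List.length_eq_one_iff.mp h1
          cases t with | node ts =>
          have h2 := (hroot _ hf (node ts) (by simp)).1
          have h3 : ts.length = 0 := by
            by_contra h4
            rw [hsb (deg (node ts)) (by simpa [deg] using h4)] at h2
            omega
          rw [List.length_eq_zero_iff.mp h3]
          rfl
        · intro hf
          rw [Set.mem_singleton_iff] at hf
          subst hf
          intro b
          rw [ecdF_cons, ecdF_nil, ecd_node]
          rcases eq_or_ne b 0 with rfl | hb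
          · simpa [ecdF_nil] using hs0.symm
          · simp [List.length_nil, Ne.symm hb, ecdF_nil, hsb b hb]
      rw [hset]
      refine ⟨Set.finite_singleton _, ?_⟩
      rw [Set.ncard_singleton, (show z = 1 by omega)]
      norm_num
      intro b _
      rcases eq_or_ne b 0 with rfl | hb
      · simp [hs0]
      · simp [hsb b hb]
    · -- inductive case m ≥ 2
      set Fib : ℕ → Set (List PlaneTree) :=
        fun c => {f ∈ forestSet s | rootDeg f 0 = c} with hFib
      have hcov : forestSet s = ⋃ c ∈ Finset.range M, Fib c := by
        ext f
        simp only [Set.mem_iUnion, Finset.mem_range, hFib, Set.mem_setOf_eq]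
        constructor
        · intro hf
          have hne : f ≠ [] := by
            intro h
            have := hlen f hf
            rw [h] at this
            simp at this
            omega
          obtain ⟨t, rest, rfl⟩ := List.exists_cons_of_ne_nil hne
          refine ⟨deg t, (hroot _ hf t (by simp)).2, hf, rfl⟩
        · rintro ⟨c, _, hf, _⟩
          exact hf
      -- key bijection for c with s c ≥ 1
      have hkey : ∀ c, c < M → 1 ≤ s c →
          Fib c = ins c '' forestSet (sdel s c) := by
        intro c hc hsc
        have hce : c ≤ e := by
          calc c ≤ c * s c := Nat.le_mul_of_pos_right c hsc
          _ ≤ e := he ▸ Finset.single_le_sum (f := fun b => b * s b)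
              (fun i _ => Nat.zero_le _) (Finset.mem_range.mpr hc)
        have hlen' : ∀ g ∈ forestSet (sdel s c), g.length = z - 1 + c := by
          intro g hg
          have := length_forest (sdel_supp hsupp c) hg
          rw [sum_sdel hc hsc, sum_mul_sdel hc hsc, hm, ← he] at this
          omega
        ext f
        simp only [hFib, Set.mem_setOf_eq, Set.mem_image]
        constructor
        · rintro ⟨hf, hdeg⟩
          have hne : f ≠ [] := by
            intro h
            have := hlen f hf
            rw [h] at this
            simp at this
            omega
          obtain ⟨t, rest, rfl⟩ := List.exists_cons_of_ne_nil hne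
          cases t with | node ts =>
          have hts : ts.length = c := by simpa [rootDeg, deg] using hdeg
          refine ⟨ts ++ rest, ?_, ?_⟩
          · intro b
            have hfb := hf b
            rw [ecdF_cons, ecd_node, hts] at hfb
            rw [ecdF_append]
            simp only [sdel]
            rcases eq_or_ne b c with rfl | h
            · simp only [if_pos rfl] at hfb ⊢
              omega
            · rw [if_neg (Ne.symm h)] at hfb
              rw [if_neg h]
              omega
          · simp only [ins, List.take_left' hts, List.drop_left' hts]
        · rintro ⟨g, hg, rfl⟩
          have hglen : g.length = z - 1 + c := hlen' g hg
          have hcg : c ≤ g.length := by omega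
          constructor
          · intro b
            rw [ecdF_ins c g hcg b, hg b]
            simp only [sdel]
            rcases eq_or_ne b c with rfl | h
            · simp; omega
            · simp [h, Ne.symm h]
          · exact rootDeg_ins c g hcg
      have hempty : ∀ c, s c = 0 → Fib c = ∅ := by
        intro c hsc
        ext f
        simp only [hFib, Set.mem_setOf_eq, Set.mem_empty_iff_false, iff_false, not_and]
        intro hf hdeg
        have hne : f ≠ [] := by
          intro h
          have := hlen f hf
          rw [h] at this
          simp at this
          omega
        obtain ⟨t, rest, rfl⟩ := List.exists_cons_of_ne_nil hne
        have := (hroot _ hf t (by simp)).1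
        have hdt : deg t = c := by simpa [rootDeg, deg] using hdeg
        rw [hdt, hsc] at this
        omega
      -- apply induction hypothesis
      have hIH : ∀ c, c < M → 1 ≤ s c →
          (forestSet (sdel s c)).Finite ∧
          (forestSet (sdel s c)).ncard * ∏ b ∈ Finset.range M, (sdel s c b).factorial
            = (z - 1 + c) * (m - 2).factorial := by
        intro c hc hsc
        have hce : c ≤ e := by
          calc c ≤ c * s c := Nat.le_mul_of_pos_right c hsc
          _ ≤ e := he ▸ Finset.single_le_sum (f := fun b => b * s b)
              (fun i _ => Nat.zero_le _) (Finset.mem_range.mpr hc)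
        obtain ⟨hfin, hcard⟩ := IH (m - 1) (by omega) (sdel s c) M (sdel_supp hsupp c)
          (by rw [sum_sdel hc hsc, hm]) (by omega)
        refine ⟨hfin, ?_⟩
        rw [hcard, sum_mul_sdel hc hsc, ← he]
        congr 2 <;> omega
      have hfinFib : ∀ c, c < M → (Fib c).Finite := by
        intro c hc
        rcases Nat.eq_zero_or_pos (s c) with h | h
        · rw [hempty c h]; exact Set.finite_empty
        · rw [hkey c hc h]
          exact Set.Finite.image _ (hIH c hc h).1
      have hfin : (forestSet s).Finite := by
        rw [hcov]
        exact Set.Finite.biUnion (Finset.range M).finite_toSet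
          (fun c hc => hfinFib c (by simpa using hc))
      refine ⟨hfin, ?_⟩
      have hdisj : ∀ c, c < M → ∀ c', c' < M → c ≠ c' → ∀ x, x ∈ Fib c → x ∉ Fib c' := by
        intro c _ c' _ hne x hx hx'
        simp only [hFib, Set.mem_setOf_eq] at hx hx'
        exact hne (hx.2 ▸ hx'.2 ▸ rfl)
      have hcard : (forestSet s).ncard = ∑ c ∈ Finset.range M, (Fib c).ncard := by
        rw [hcov]
        exact ncard_biUnion M Fib hfinFib hdisj
      -- per-fiber count
      have hper : ∀ c ∈ Finset.range M,
          (Fib c).ncard * ∏ b ∈ Finset.range M, (s b).factorial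
            = s c * ((z - 1 + c) * (m - 2).factorial) := by
        intro c hc
        rw [Finset.mem_range] at hc
        rcases Nat.eq_zero_or_pos (s c) with h | h
        · rw [hempty c h, h]
          simp
        · rw [hkey c hc h, Set.ncard_image_of_injOn ((ins_injective c).injOn),
            prod_factorial_sdel hc h]
          have := (hIH c hc h).2
          calc (forestSet (sdel s c)).ncard *
                (s c * ∏ b ∈ Finset.range M, (sdel s c b).factorial)
              = s c * ((forestSet (sdel s c)).ncard *
                ∏ b ∈ Finset.range M, (sdel s c b).factorial) := by ring
            _ = s c * ((z - 1 + c) * (m - 2).factorial) := by rw [this]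
      rw [hcard, Finset.sum_mul, Finset.sum_congr rfl hper]
      -- final arithmetic
      have hsum : ∑ c ∈ Finset.range M, s c * ((z - 1 + c) * (m - 2).factorial)
          = ((z - 1) * m + e) * (m - 2).factorial := by
        have hterm : ∀ c ∈ Finset.range M, s c * ((z - 1 + c) * (m - 2).factorial)
            = (s c * (z - 1) + c * s c) * (m - 2).factorial := by
          intro c _; ring
        rw [Finset.sum_congr rfl hterm, ← Finset.sum_mul]
        congr 1
        rw [Finset.sum_add_distrib, ← Finset.sum_mul, hm, ← he,
          Nat.mul_comm m (z - 1)]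
      rw [hsum]
      have harith : (z - 1) * m + e = z * (m - 1) := by
        obtain ⟨w, hw⟩ : ∃ w, z = w + 1 := ⟨z - 1, by omega⟩
        have hme : m = w + 1 + e := by omega
        rw [hw, hme]
        have h1 : w + 1 - 1 = w := by omega
        have h2 : w + 1 + e - 1 = w + e := by omega
        rw [h1, h2]
        ring
      rw [harith, mul_assoc]
      congr 1
      have : m - 1 - 1 = m - 2 := by omega
      rw [← this, Nat.mul_factorial_pred (by omega)]

end PlaneTree
end Paper
namespace Paper
namespace PlaneTree

def childList : PlaneTree → List PlaneTree
  | node ts => ts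

lemma rootDeg_prefix (g X : List PlaneTree) (k j₀ : ℕ)
    (hk : k < j₀) (hj : j₀ ≤ g.length) :
    rootDeg (g.take j₀ ++ X) k = rootDeg g k := by
  unfold rootDeg
  rw [List.getD_eq_getElem?_getD, List.getD_eq_getElem?_getD]
  have hlen : k < (g.take j₀).length := by
    rw [List.length_take]
    omega
  rw [List.getElem?_append, if_pos hlen, List.getElem?_take, if_pos hk]

lemma drop_append_eq {α : Type*} (A l₂ : List α) {n : ℕ} (k : ℕ) (h : A.length = n) :
    (A ++ l₂).drop (n + k) = l₂.drop k := by
  rw [← h]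
  exact List.drop_length_add_append k

lemma rootDeg_at (A : List PlaneTree) (t : PlaneTree) (B : List PlaneTree) :
    rootDeg (A ++ t :: B) A.length = deg t := by
  unfold rootDeg
  rw [List.getD_eq_getElem?_getD, List.getElem?_append_right le_rfl]
  simp

/-- Lemma: the event that roots at given distinct positions have given children
counts is equinumerous with the forests of the reduced ECD. -/
theorem event_card : ∀ (r : ℕ) (s : ℕ → ℕ) (M m z : ℕ),
    (∀ i, M ≤ i → s i = 0) → (∑ b ∈ Finset.range M, s b = m) →
    (m = z + ∑ b ∈ Finset.range M, b * s b) →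
    ∀ (j : Fin r → ℕ), Function.Injective j → (∀ a, j a < z) →
    ∀ (i : Fin r → ℕ), (∀ b, (∑ a : Fin r, if i a = b then 1 else 0) ≤ s b) →
    {f ∈ forestSet s | ∀ a, rootDeg f (j a) = i a}.ncard
      = (forestSet (fun b => s b - ∑ a : Fin r, if i a = b then 1 else 0)).ncard := by
  intro r
  induction r with
  | zero =>
    intro s M m z hsupp hm hz j hj hjz i hle
    have h1 : {f ∈ forestSet s | ∀ a : Fin 0, rootDeg f (j a) = i a} = forestSet s := by
      ext f
      simp [Set.mem_setOf_eq]
    have h2 : (fun b => s b - ∑ a : Fin 0, if i a = b then 1 else 0) = s := by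
      funext b
      simp
    rw [h1, h2]
  | succ r IH =>
    intro s M m z hsupp hm hz j hj hjz i hle
    obtain ⟨a₀, -, hmax⟩ := Finset.exists_max_image Finset.univ j ⟨0, Finset.mem_univ 0⟩
    set i₀ := i a₀ with hi₀
    set j₀ := j a₀ with hj₀
    set cnt : ℕ → ℕ := fun b => ∑ a : Fin (r+1), if i a = b then 1 else 0 with hcntdef
    set j' : Fin r → ℕ := fun a => j (a₀.succAbove a) with hj'def
    set i' : Fin r → ℕ := fun a => i (a₀.succAbove a) with hi'def
    set cnt' : ℕ → ℕ := fun b => ∑ a : Fin r, if i' a = b then 1 else 0 with hcnt'def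
    have hcnt : ∀ b, cnt b = (if i₀ = b then 1 else 0) + cnt' b := by
      intro b
      rw [hcntdef]
      simp only []
      rw [Fin.sum_univ_succAbove (fun a => if i a = b then 1 else 0) a₀]
    have hsi₀ : 1 ≤ s i₀ := by
      refine le_trans ?_ (hle i₀)
      show 1 ≤ cnt i₀
      rw [hcnt i₀]
      simp
    have hi₀M : i₀ < M := by
      by_contra hM
      push_neg at hM
      rw [hsupp _ hM] at hsi₀
      omega
    have he_i₀ : i₀ ≤ ∑ b ∈ Finset.range M, b * s b := by
      calc i₀ ≤ i₀ * s i₀ := Nat.le_mul_of_pos_right i₀ hsi₀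
      _ ≤ ∑ b ∈ Finset.range M, b * s b := Finset.single_le_sum (f := fun b => b * s b)
          (fun b _ => Nat.zero_le _) (Finset.mem_range.mpr hi₀M)
    have hj₀z : j₀ < z := hjz a₀
    have hm₁ : ∑ b ∈ Finset.range M, sdel s i₀ b = m - 1 := by
      rw [sum_sdel hi₀M hsi₀, hm]
    have he₁ : ∑ b ∈ Finset.range M, b * sdel s i₀ b
        = (∑ b ∈ Finset.range M, b * s b) - i₀ := sum_mul_sdel hi₀M hsi₀
    have hj'lt : ∀ a, j' a < j₀ := by
      intro a
      refine lt_of_le_of_ne (hmax _ (Finset.mem_univ _)) fun h => ?_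
      exact Fin.succAbove_ne a₀ a (hj h)
    have hj'z : ∀ a, j' a < z - 1 + i₀ := by
      intro a
      have := hj'lt a
      omega
    have hle' : ∀ b, (∑ a : Fin r, if i' a = b then 1 else 0) ≤ sdel s i₀ b := by
      intro b
      have h1 : cnt b ≤ s b := hle b
      have h2 := hcnt b
      show cnt' b ≤ sdel s i₀ b
      simp only [sdel]
      rcases eq_or_ne b i₀ with rfl | hne
      · simp only [if_pos rfl] at h2 ⊢
        omega
      · rw [if_neg (Ne.symm hne)] at h2
        rw [if_neg hne]
        omega
    -- lengths
    have hlenf : ∀ f ∈ forestSet s, f.length = z := by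
      intro f hf
      have := length_forest hsupp hf
      omega
    have hleng : ∀ g ∈ forestSet (sdel s i₀), g.length = z - 1 + i₀ := by
      intro g hg
      have := length_forest (sdel_supp hsupp i₀) hg
      rw [hm₁, he₁] at this
      omega
    -- the maps
    set Bmap : List PlaneTree → List PlaneTree :=
      fun f => f.take j₀ ++ (childList (f.getD j₀ (node [])) ++ f.drop (j₀+1)) with hBmapdef
    set Gmap : List PlaneTree → List PlaneTree :=
      fun g => g.take j₀ ++ (node ((g.drop j₀).take i₀) :: g.drop (j₀ + i₀)) with hGmapdef
    set E : Set (List PlaneTree) :=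
      {f ∈ forestSet s | ∀ a, rootDeg f (j a) = i a} with hEdef
    set E' : Set (List PlaneTree) :=
      {g ∈ forestSet (sdel s i₀) | ∀ a, rootDeg g (j' a) = i' a} with hE'def
    -- decomposition of elements of E
    have hdecomp : ∀ f ∈ E, ∃ ts : List PlaneTree, ts.length = i₀ ∧
        f = f.take j₀ ++ (node ts :: f.drop (j₀+1)) ∧ f.getD j₀ (node []) = node ts := by
      intro f hf
      obtain ⟨hf1, hf2⟩ := hf
      have hj₀len : j₀ < f.length := by rw [hlenf f hf1]; exact hj₀z
      obtain ⟨ts, hget⟩ : ∃ ts, f.getD j₀ (node []) = node ts := by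
        cases f.getD j₀ (node []) with | node ts => exact ⟨ts, rfl⟩
      have hget' : f[j₀] = node ts := by
        rw [← List.getD_eq_getElem f (node []) hj₀len]
        exact hget
      have hts : ts.length = i₀ := by
        have := hf2 a₀
        rw [rootDeg, hget] at this
        simpa [deg] using this
      refine ⟨ts, hts, ?_, hget⟩
      conv_lhs => rw [← List.take_append_drop j₀ f]
      rw [List.drop_eq_getElem_cons hj₀len, hget']
    -- forward map lands in E'
    have hmapsβ : ∀ f ∈ E, Bmap f ∈ E' := by
      intro f hf
      obtain ⟨ts, hts, hfdec, hget⟩ := hdecomp f hf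
      obtain ⟨hf1, hf2⟩ := hf
      have hj₀len : j₀ < f.length := by rw [hlenf f hf1]; exact hj₀z
      have hBf : Bmap f = f.take j₀ ++ (ts ++ f.drop (j₀+1)) := by
        rw [hBmapdef]
        simp only []
        rw [hget]
        rfl
      have hsb : ∀ b, ecdF (f.take j₀) b + ((if i₀ = b then 1 else 0) + ecdF ts b)
          + ecdF (f.drop (j₀+1)) b = s b := by
        intro b
        have h0 : ecdF f b = s b := hf1 b
        have h1 : ecdF f b = ecdF (f.take j₀ ++ (node ts :: f.drop (j₀+1))) b :=
          congrArg (fun l => ecdF l b) hfdec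
        rw [ecdF_append, ecdF_cons, ecd_node, hts] at h1
        omega
      constructor
      · intro b
        rw [hBf, ecdF_append, ecdF_append]
        have := hsb b
        simp only [sdel]
        rcases eq_or_ne b i₀ with rfl | hne
        · rw [if_pos rfl] at this ⊢
          omega
        · rw [if_neg (Ne.symm hne)] at this
          rw [if_neg hne]
          omega
      · intro a
        rw [hBf, rootDeg_prefix f _ (j' a) j₀ (hj'lt a) (by omega)]
        exact hf2 (a₀.succAbove a)
    -- left inverse on E
    have hγβ : ∀ f ∈ E, Gmap (Bmap f) = f := by
      intro f hf
      obtain ⟨ts, hts, hfdec, hget⟩ := hdecomp f hf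
      have hj₀len : j₀ < f.length := by rw [hlenf f hf.1]; exact hj₀z
      have hAlen : (f.take j₀).length = j₀ := by rw [List.length_take]; omega
      have hBf : Bmap f = f.take j₀ ++ (ts ++ f.drop (j₀+1)) := by
        rw [hBmapdef]
        simp only []
        rw [hget]
        rfl
      rw [hBf, hGmapdef]
      simp only []
      rw [List.take_left' hAlen, List.drop_left' hAlen, List.take_left' hts]
      have hdr : (f.take j₀ ++ (ts ++ f.drop (j₀+1))).drop (j₀ + i₀)
          = f.drop (j₀+1) := by
        rw [drop_append_eq _ _ i₀ hAlen, List.drop_left' hts]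
      rw [hdr]
      exact hfdec.symm
    -- the inverse map: E' → E with right inverse property
    have hmapsγ : ∀ g ∈ E', Gmap g ∈ E ∧ Bmap (Gmap g) = g := by
      intro g hg
      obtain ⟨hg1, hg2⟩ := hg
      have hglen : g.length = z - 1 + i₀ := hleng g hg1
      have hj₀g : j₀ ≤ g.length := by omega
      have hAlen : (g.take j₀).length = j₀ := by rw [List.length_take]; omega
      have hClen : ((g.drop j₀).take i₀).length = i₀ := by
        rw [List.length_take, List.length_drop]
        omega
      have hgdec : g = g.take j₀ ++ ((g.drop j₀).take i₀ ++ g.drop (j₀ + i₀)) := by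
        conv_lhs => rw [← List.take_append_drop j₀ g]
        congr 1
        conv_lhs => rw [← List.take_append_drop i₀ (g.drop j₀)]
        rw [List.drop_drop]
      have hGg : Gmap g = g.take j₀ ++ (node ((g.drop j₀).take i₀) :: g.drop (j₀ + i₀)) := by
        rw [hGmapdef]
      have hsb : ∀ b, ecdF (g.take j₀) b + ecdF ((g.drop j₀).take i₀) b
          + ecdF (g.drop (j₀ + i₀)) b = sdel s i₀ b := by
        intro b
        have h0 : ecdF g b = sdel s i₀ b := hg1 b
        have h1 : ecdF g b = ecdF (g.take j₀ ++ ((g.drop j₀).take i₀ ++ g.drop (j₀ + i₀))) b :=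
          congrArg (fun l => ecdF l b) hgdec
        rw [ecdF_append, ecdF_append] at h1
        omega
      have hEg : Gmap g ∈ E := by
        constructor
        · intro b
          rw [hGg, ecdF_append, ecdF_cons, ecd_node, hClen]
          have := hsb b
          simp only [sdel] at this ⊢
          rcases eq_or_ne b i₀ with rfl | hne
          · rw [if_pos rfl] at this
            rw [if_pos rfl]
            omega
          · rw [if_neg hne] at this
            rw [if_neg (Ne.symm hne)]
            omega
        · intro a
          rcases eq_or_ne a a₀ with rfl | hne
          · have h3 := rootDeg_at (g.take j₀) (node ((g.drop j₀).take i₀)) (g.drop (j₀ + i₀))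
            rw [hAlen] at h3
            show rootDeg (Gmap g) j₀ = i₀
            rw [hGg, h3]
            simpa [deg] using hClen
          · obtain ⟨a', ha'⟩ := Fin.exists_succAbove_eq hne
            rw [← ha']
            have h1 : j (a₀.succAbove a') = j' a' := rfl
            have h2 : i (a₀.succAbove a') = i' a' := rfl
            rw [h1, h2, hGg, rootDeg_prefix g _ (j' a') j₀ (hj'lt a') hj₀g]
            exact hg2 a'
      refine ⟨hEg, ?_⟩
      rw [hGg, hBmapdef]
      simp only []
      rw [List.take_left' hAlen]
      have hget : (g.take j₀ ++ (node ((g.drop j₀).take i₀) :: g.drop (j₀ + i₀))).getD j₀ (node [])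
          = node ((g.drop j₀).take i₀) := by
        rw [List.getD_eq_getElem?_getD, List.getElem?_append_right (by rw [hAlen])]
        rw [hAlen]
        simp
      rw [hget]
      have hdr : (g.take j₀ ++ (node ((g.drop j₀).take i₀) :: g.drop (j₀ + i₀))).drop (j₀ + 1)
          = g.drop (j₀ + i₀) := by
        rw [drop_append_eq _ _ 1 hAlen]
        simp
      rw [hdr]
      simp only [childList]
      exact hgdec.symm
    -- E' is the image of E
    have hEE' : E' = Bmap '' E := by
      apply Set.eq_of_subset_of_subset
      · intro g hg
        exact ⟨Gmap g, (hmapsγ g hg).1, (hmapsγ g hg).2⟩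
      · rintro x ⟨f, hf, rfl⟩
        exact hmapsβ f hf
    have hinj : Set.InjOn Bmap E := by
      intro f₁ h₁ f₂ h₂ heq
      rw [← hγβ f₁ h₁, ← hγβ f₂ h₂, heq]
    have hcard : E.ncard = E'.ncard := by
      rw [hEE', Set.ncard_image_of_injOn hinj]
    rw [hcard, hE'def]
    have hIH := IH (sdel s i₀) M (m - 1) (z - 1 + i₀) (sdel_supp hsupp i₀) hm₁
      (by rw [he₁]; omega) j'
      (fun a₁ a₂ h => Fin.succAbove_right_injective (hj h)) hj'z i' hle'
    rw [hIH]
    have hfun : (fun b => sdel s i₀ b - ∑ a : Fin r, if i' a = b then 1 else 0)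
        = (fun b => s b - ∑ a : Fin (r+1), if i a = b then 1 else 0) := by
      funext b
      have h2 := hcnt b
      have h1 : cnt b ≤ s b := hle b
      show sdel s i₀ b - cnt' b = s b - cnt b
      simp only [sdel]
      rcases eq_or_ne b i₀ with rfl | hne
      · rw [if_pos rfl] at h2 ⊢
        omega
      · rw [if_neg (Ne.symm hne)] at h2
        rw [if_neg hne]
        omega
    rw [hfun]

end PlaneTree
end Paper
namespace Paper
namespace PlaneTree

lemma ecdF_eq_sum_range (f : List PlaneTree) (b : ℕ) :
    ecdF f b = ∑ q ∈ Finset.range f.length, ecd (f.getD q (node [])) b := by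
  induction f with
  | nil => simp [ecdF]
  | cons t f ih =>
    rw [ecdF_cons, ih, List.length_cons, Finset.sum_range_succ']
    simp [Nat.add_comm]

lemma factorial_le_pow_mul : ∀ (c n : ℕ), c ≤ n →
    n.factorial ≤ n ^ c * (n - c).factorial := by
  intro c
  induction c with
  | zero => intro n _; simp
  | succ c ih =>
    intro n hc
    have h1 := ih n (by omega)
    have h2 : (n - c).factorial = (n - c) * (n - c - 1).factorial :=
      (Nat.mul_factorial_pred (by omega)).symm
    have h3 : n - c - 1 = n - (c + 1) := by omega
    calc n.factorial ≤ n ^ c * (n - c).factorial := h1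
    _ = n ^ c * ((n - c) * (n - (c + 1)).factorial) := by rw [h2, h3]
    _ ≤ n ^ c * (n * (n - (c + 1)).factorial) :=
        Nat.mul_le_mul_left _ (Nat.mul_le_mul_right _ (by omega))
    _ = n ^ (c + 1) * (n - (c + 1)).factorial := by ring

end PlaneTree
end Paper
open Paper Paper.PlaneTree in
/-- joint upper bound on root children counts of a uniform forest. -/
theorem forest_roots_joint_upper (s : ℕ → ℕ) (M z m Δ r : ℕ)
    (hsupp : ∀ i, M ≤ i → s i = 0)
    (hm : m = ∑ i ∈ Finset.range M, s i)
    (hz : m = z + ∑ i ∈ Finset.range M, i * s i)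
    (hz1 : 1 ≤ z)
    (hΔ : s Δ ≠ 0) (hΔ' : ∀ i, Δ < i → s i = 0)
    (hr : 1 ≤ r) (hrz : r ≤ z) (hrm : 2 * r ≤ m)
    (j : Fin r → ℕ) (hj : Function.Injective j) (hjz : ∀ a, j a < z)
    (i : Fin r → ℕ) :
    ({f ∈ forestSet s | ∀ a, rootDeg f (j a) = i a}.ncard : ℝ)
        / (forestSet s).ncard
      ≤ (r : ℝ) * 2 ^ r * (1 + (Δ : ℝ) / z) * (∏ a, (s (i a) : ℝ)) / (m : ℝ) ^ r := by
  classical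
  have hm2 : 2 ≤ m := by omega
  obtain ⟨hFfin, hFcard⟩ := forest_count m s M hsupp hm.symm (by omega)
  have hFc : (forestSet s).ncard * ∏ b ∈ Finset.range M, (s b).factorial
      = z * (m - 1).factorial := by
    rw [hFcard]
    congr 1
    omega
  have hPpos : 0 < ∏ b ∈ Finset.range M, (s b).factorial :=
    Finset.prod_pos fun b _ => Nat.factorial_pos _
  have hFpos : 0 < (forestSet s).ncard := by
    rcases Nat.eq_zero_or_pos (forestSet s).ncard with h0 | h
    · rw [h0, zero_mul] at hFc
      have h1 : 0 < z * (m - 1).factorial := Nat.mul_pos (by omega) (Nat.factorial_pos _)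
      omega
    · exact h
  by_cases hle : ∀ b, (∑ a : Fin r, if i a = b then 1 else 0) ≤ s b
  · -- main case
    -- basic facts about the constraint values
    have hcnt1 : ∀ a, 1 ≤ ∑ a' : Fin r, if i a' = i a then 1 else 0 := by
      intro a
      have := Finset.single_le_sum (f := fun a' : Fin r => if i a' = i a then 1 else 0)
        (fun _ _ => Nat.zero_le _) (Finset.mem_univ a)
      simpa using this
    have hsia : ∀ a, 1 ≤ s (i a) := fun a => le_trans (hcnt1 a) (hle (i a))
    have hiM : ∀ a, i a < M := by
      intro a
      by_contra h
      push_neg at h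
      have := hsia a
      rw [hsupp _ h] at this
      omega
    have hiΔ : ∀ a, i a ≤ Δ := by
      intro a
      by_contra h
      push_neg at h
      have := hsia a
      rw [hΔ' _ h] at this
      omega
    have hsum_ite : ∀ a : Fin r, ∑ b ∈ Finset.range M, (if i a = b then 1 else 0) = 1 := by
      intro a
      rw [Finset.sum_ite_eq (Finset.range M) (i a) (fun _ => 1)]
      simp [hiM a]
    have hscnt : ∑ b ∈ Finset.range M, (∑ a : Fin r, if i a = b then 1 else 0) = r := by
      rw [Finset.sum_comm, Finset.sum_congr rfl (fun a _ => hsum_ite a)]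
      simp
    have hsum_ite2 : ∀ a : Fin r,
        ∑ b ∈ Finset.range M, b * (if i a = b then 1 else 0) = i a := by
      intro a
      simp only [mul_ite, mul_one, mul_zero]
      rw [Finset.sum_ite_eq (Finset.range M) (i a) (fun b => b)]
      simp [hiM a]
    have hscnt2 : ∑ b ∈ Finset.range M, b * (∑ a : Fin r, if i a = b then 1 else 0)
        = ∑ a : Fin r, i a := by
      simp only [Finset.mul_sum]
      rw [Finset.sum_comm]
      exact Finset.sum_congr rfl fun a _ => hsum_ite2 a
    have hSe : (∑ a : Fin r, i a) ≤ ∑ b ∈ Finset.range M, b * s b := by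
      rw [← hscnt2]
      exact Finset.sum_le_sum fun b _ => Nat.mul_le_mul_left b (hle b)
    have hm' : ∑ b ∈ Finset.range M, (s b - ∑ a : Fin r, if i a = b then 1 else 0)
        = m - r := by
      rw [Finset.sum_tsub_distrib (Finset.range M) (fun b _ => hle b), hscnt, ← hm]
    have he' : ∑ b ∈ Finset.range M, b * (s b - ∑ a : Fin r, if i a = b then 1 else 0)
        = (∑ b ∈ Finset.range M, b * s b) - ∑ a : Fin r, i a := by
      simp only [Nat.mul_sub]
      rw [Finset.sum_tsub_distrib (Finset.range M)
        (fun b _ => Nat.mul_le_mul_left b (hle b)), hscnt2]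
    have hsupp' : ∀ b, M ≤ b →
        s b - (∑ a : Fin r, if i a = b then 1 else 0) = 0 := by
      intro b hb
      rw [hsupp b hb]
      simp
    obtain ⟨hF'fin, hF'c⟩ := forest_count (m - r)
      (fun b => s b - ∑ a : Fin r, if i a = b then 1 else 0) M hsupp' hm' (by omega)
    have hEcard := event_card r s M m z hsupp hm.symm hz j hj hjz i hle
    have hz'eq : (m - r) - ((∑ b ∈ Finset.range M, b * s b) - ∑ a : Fin r, i a)
        = z - r + ∑ a : Fin r, i a := by omega
    have hA : {f ∈ forestSet s | ∀ a, rootDeg f (j a) = i a}.ncard *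
        ∏ b ∈ Finset.range M, ((s b - ∑ a : Fin r, if i a = b then 1 else 0).factorial)
        = (z - r + ∑ a : Fin r, i a) * (m - r - 1).factorial := by
      rw [hEcard, hF'c, he', hz'eq]
    -- inequality (i): factorial product bound
    have hgroup : ∏ b ∈ Finset.range M, (s b) ^ (∑ a : Fin r, if i a = b then 1 else 0)
        = ∏ a : Fin r, s (i a) := by
      rw [← Finset.prod_fiberwise_of_maps_to (t := Finset.range M) (g := i)
        (fun a _ => Finset.mem_range.mpr (hiM a)) (fun a => s (i a))]
      refine Finset.prod_congr rfl fun b _ => ?_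
      have hinner : ∏ a ∈ Finset.filter (fun a => i a = b) Finset.univ, s (i a)
          = ∏ a ∈ Finset.filter (fun a => i a = b) Finset.univ, s b :=
        Finset.prod_congr rfl fun a ha => by rw [(Finset.mem_filter.mp ha).2]
      rw [hinner, Finset.prod_const, Finset.card_filter]
    have hPfac : ∏ b ∈ Finset.range M, (s b).factorial
        ≤ (∏ a : Fin r, s (i a)) *
          ∏ b ∈ Finset.range M, ((s b - ∑ a : Fin r, if i a = b then 1 else 0).factorial) := by
      rw [← hgroup, ← Finset.prod_mul_distrib]
      exact Finset.prod_le_prod' fun b _ => factorial_le_pow_mul _ _ (hle b)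
    -- inequality (ii): root count bound
    have hz'le : z - r + (∑ a : Fin r, i a) ≤ r * (z + Δ) := by
      have hSΔ : (∑ a : Fin r, i a) ≤ r * Δ := by
        calc (∑ a : Fin r, i a) ≤ ∑ _a : Fin r, Δ := Finset.sum_le_sum fun a _ => hiΔ a
        _ = r * Δ := by simp [Finset.sum_const, mul_comm]
      have h1 : r * (z + Δ) = r * z + r * Δ := Nat.mul_add r z Δ
      have h2 : z ≤ r * z := Nat.le_mul_of_pos_left z (by omega)
      omega
    -- inequality (iii): factorial ratio bound
    have hfact : m ^ r * (m - r - 1).factorial ≤ 2 ^ r * (m - 1).factorial := by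
      have h1 : (m - r - 1).factorial * (m - r) ^ r ≤ (m - 1).factorial := by
        have h := Nat.factorial_mul_pow_le_factorial (m := m - r - 1) (n := r)
        have e1 : m - r - 1 + 1 = m - r := by omega
        have e2 : m - r - 1 + r = m - 1 := by omega
        rwa [e1, e2] at h
      have h2 : m ^ r ≤ 2 ^ r * (m - r) ^ r := by
        calc m ^ r ≤ (2 * (m - r)) ^ r := Nat.pow_le_pow_left (by omega) r
        _ = 2 ^ r * (m - r) ^ r := mul_pow 2 (m - r) r
      calc m ^ r * (m - r - 1).factorial
          ≤ (2 ^ r * (m - r) ^ r) * (m - r - 1).factorial := Nat.mul_le_mul_right _ h2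
      _ = 2 ^ r * ((m - r - 1).factorial * (m - r) ^ r) := by ring
      _ ≤ 2 ^ r * (m - 1).factorial := Nat.mul_le_mul_left _ h1
    -- combine into the master natural-number inequality
    have hPP : 0 < (∏ b ∈ Finset.range M, (s b).factorial) *
        ∏ b ∈ Finset.range M, ((s b - ∑ a : Fin r, if i a = b then 1 else 0).factorial) :=
      Nat.mul_pos hPpos (Finset.prod_pos fun b _ => Nat.factorial_pos _)
    have T : ({f ∈ forestSet s | ∀ a, rootDeg f (j a) = i a}.ncard * m ^ r * z) *
        ((∏ b ∈ Finset.range M, (s b).factorial) *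
          ∏ b ∈ Finset.range M, ((s b - ∑ a : Fin r, if i a = b then 1 else 0).factorial))
        ≤ (r * 2 ^ r * (z + Δ) * (∏ a : Fin r, s (i a)) * (forestSet s).ncard) *
        ((∏ b ∈ Finset.range M, (s b).factorial) *
          ∏ b ∈ Finset.range M, ((s b - ∑ a : Fin r, if i a = b then 1 else 0).factorial)) := by
      calc ({f ∈ forestSet s | ∀ a, rootDeg f (j a) = i a}.ncard * m ^ r * z) *
          ((∏ b ∈ Finset.range M, (s b).factorial) *
            ∏ b ∈ Finset.range M, ((s b - ∑ a : Fin r, if i a = b then 1 else 0).factorial))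
          = ({f ∈ forestSet s | ∀ a, rootDeg f (j a) = i a}.ncard *
              ∏ b ∈ Finset.range M, ((s b - ∑ a : Fin r, if i a = b then 1 else 0).factorial)) *
            (m ^ r * (∏ b ∈ Finset.range M, (s b).factorial)) * z := by ring
        _ = ((z - r + ∑ a : Fin r, i a) * (m - r - 1).factorial) *
            (m ^ r * (∏ b ∈ Finset.range M, (s b).factorial)) * z := by rw [hA]
        _ = z * ((z - r + ∑ a : Fin r, i a) *
            ((m ^ r * (m - r - 1).factorial) * (∏ b ∈ Finset.range M, (s b).factorial))) := by
            ring
        _ ≤ z * ((r * (z + Δ)) * ((2 ^ r * (m - 1).factorial) *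
            ((∏ a : Fin r, s (i a)) *
              ∏ b ∈ Finset.range M, ((s b - ∑ a : Fin r, if i a = b then 1 else 0).factorial)))) :=
            Nat.mul_le_mul_left z (Nat.mul_le_mul hz'le (Nat.mul_le_mul hfact hPfac))
        _ = (z * (m - 1).factorial) * (r * 2 ^ r * (z + Δ) * (∏ a : Fin r, s (i a)) *
            ∏ b ∈ Finset.range M, ((s b - ∑ a : Fin r, if i a = b then 1 else 0).factorial)) := by
            ring
        _ = ((forestSet s).ncard * ∏ b ∈ Finset.range M, (s b).factorial) *
            (r * 2 ^ r * (z + Δ) * (∏ a : Fin r, s (i a)) *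
            ∏ b ∈ Finset.range M, ((s b - ∑ a : Fin r, if i a = b then 1 else 0).factorial)) := by
            rw [hFc]
        _ = (r * 2 ^ r * (z + Δ) * (∏ a : Fin r, s (i a)) * (forestSet s).ncard) *
            ((∏ b ∈ Finset.range M, (s b).factorial) *
            ∏ b ∈ Finset.range M, ((s b - ∑ a : Fin r, if i a = b then 1 else 0).factorial)) := by
            ring
    have NK : {f ∈ forestSet s | ∀ a, rootDeg f (j a) = i a}.ncard * m ^ r * z
        ≤ r * 2 ^ r * (z + Δ) * (∏ a : Fin r, s (i a)) * (forestSet s).ncard :=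
      Nat.le_of_mul_le_mul_right T hPP
    -- pass to the reals
    have hFposR : (0 : ℝ) < ((forestSet s).ncard : ℝ) := by exact_mod_cast hFpos
    have hmR : (0 : ℝ) < (m : ℝ) := by exact_mod_cast (by omega : 0 < m)
    have hmposR : (0 : ℝ) < (m : ℝ) ^ r := by positivity
    have hzposR : (0 : ℝ) < (z : ℝ) := by exact_mod_cast hz1
    rw [div_le_div_iff₀ hFposR hmposR]
    have hNKR : ({f ∈ forestSet s | ∀ a, rootDeg f (j a) = i a}.ncard : ℝ) * (m : ℝ) ^ r * z
        ≤ (r : ℝ) * 2 ^ r * ((z : ℝ) + (Δ : ℝ)) * (∏ a, (s (i a) : ℝ)) *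
          ((forestSet s).ncard : ℝ) := by
      exact_mod_cast NK
    have h1z : 1 + (Δ : ℝ) / (z : ℝ) = ((z : ℝ) + (Δ : ℝ)) / (z : ℝ) := by
      field_simp
    rw [h1z]
    have hrw : (r : ℝ) * 2 ^ r * (((z : ℝ) + (Δ : ℝ)) / (z : ℝ)) * (∏ a, (s (i a) : ℝ)) *
        ((forestSet s).ncard : ℝ)
        = ((r : ℝ) * 2 ^ r * ((z : ℝ) + (Δ : ℝ)) * (∏ a, (s (i a) : ℝ)) *
          ((forestSet s).ncard : ℝ)) / (z : ℝ) := by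
      ring
    rw [hrw, le_div_iff₀ hzposR]
    exact hNKR
  · -- degenerate case: the event is empty
    push_neg at hle
    obtain ⟨b, hb⟩ := hle
    have hE0 : {f ∈ forestSet s | ∀ a, rootDeg f (j a) = i a} = ∅ := by
      rw [Set.eq_empty_iff_forall_notMem]
      rintro f ⟨hf1, hf2⟩
      have hlenf : f.length = z := by
        have := length_forest hsupp hf1
        omega
      have hTcard : (Finset.univ.filter (fun a : Fin r => i a = b)).card
          = ∑ a : Fin r, if i a = b then 1 else 0 := Finset.card_filter _ _
      have h1 : (Finset.univ.filter (fun a : Fin r => i a = b)).card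
          ≤ ((Finset.range f.length).filter
              (fun q => deg (f.getD q (node [])) = b)).card := by
        refine Finset.card_le_card_of_injOn (fun a => j a) ?_ ?_
        · intro a ha
          rw [Finset.mem_coe, Finset.mem_filter] at ha
          rw [Finset.mem_coe, Finset.mem_filter, Finset.mem_range, hlenf]
          exact ⟨hjz a, (hf2 a).trans ha.2⟩
        · exact fun a _ a' _ h => hj h
      have h2 : ((Finset.range f.length).filter
          (fun q => deg (f.getD q (node [])) = b)).card ≤ ecdF f b := by
        rw [ecdF_eq_sum_range]
        calc ((Finset.range f.length).filter
            (fun q => deg (f.getD q (node [])) = b)).card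
            = ∑ q ∈ (Finset.range f.length).filter
                (fun q => deg (f.getD q (node [])) = b), 1 :=
              Finset.card_eq_sum_ones _
        _ ≤ ∑ q ∈ (Finset.range f.length).filter
              (fun q => deg (f.getD q (node [])) = b),
              ecd (f.getD q (node [])) b := by
            refine Finset.sum_le_sum fun q hq => ?_
            rw [Finset.mem_filter] at hq
            have h3 := ecd_ge_one_of_deg (f.getD q (node []))
            rw [hq.2] at h3
            exact h3
        _ ≤ ∑ q ∈ Finset.range f.length, ecd (f.getD q (node [])) b :=
            Finset.sum_le_sum_of_subset (Finset.filter_subset _ _)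
      rw [hf1 b] at h2
      omega
    rw [hE0]
    simp only [Set.ncard_empty, Nat.cast_zero, zero_div]
    positivity
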